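/- Let A ⊆ R^n be a closed convex cone and A* its dual cone, and suppose A ⊆ A*. For any unit vector s, the reflection s' = 2·P_{A*}(s) − s is a unit vector satisfying ⟨s', x⟩ ≥ |⟨s, x⟩| for all x ∈ A. -/

import Mathlib

set_option maxHeartbeats 1000000 in
/-- If `A` is a closed convex cone contained in its dual cone `A*`, and `p` is the
orthogonal projection of a unit vector `s` onto `A*`, then the reflection
`s' = 2 • p - s` is a unit vector with `⟨s', x⟩ ≥ |⟨s, x⟩|` for all `x ∈ A`. -/
theorem stmt_10 {n : ℕ} (A : Set (EuclideanSpace ℝ (Fin n)))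
    (hclosed : IsClosed A) (hconv : Convex ℝ A)
    (hcone : ∀ x ∈ A, ∀ c : ℝ, 0 ≤ c → c • x ∈ A)
    (hdual : A ⊆ {y | ∀ x ∈ A, 0 ≤ (inner ℝ y x : ℝ)})
    (s p : EuclideanSpace ℝ (Fin n)) (hnorm : ‖s‖ = 1)
    (hp : p ∈ {y | ∀ x ∈ A, 0 ≤ (inner ℝ y x : ℝ)})
    (hmin : ∀ y ∈ {y : EuclideanSpace ℝ (Fin n) | ∀ x ∈ A, 0 ≤ (inner ℝ y x : ℝ)},
      dist s p ≤ dist s y) :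
    ‖(2 : ℝ) • p - s‖ = 1 ∧
      ∀ x ∈ A, |(inner ℝ s x : ℝ)| ≤ (inner ℝ ((2 : ℝ) • p - s) x : ℝ) := by
  set K : Set (EuclideanSpace ℝ (Fin n)) :=
    {y | ∀ x ∈ A, 0 ≤ (inner ℝ y x : ℝ)} with hK
  have hKconv : Convex ℝ K := by
    intro y hy z hz a b ha hb hab
    intro x hx
    have := hy x hx
    have := hz x hx
    simp only [inner_add_left, real_inner_smul_left]
    positivity
  haveI : Nonempty K := ⟨⟨p, hp⟩⟩
  have hinf : ‖s - p‖ = ⨅ w : K, ‖s - w‖ := by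
    apply le_antisymm
    · refine le_ciInf fun w => ?_
      have := hmin w w.2
      rwa [dist_eq_norm, dist_eq_norm] at this
    · have hbdd : BddBelow (Set.range fun w : K => ‖s - (w : EuclideanSpace ℝ (Fin n))‖) := by
        refine ⟨0, ?_⟩
        rintro _ ⟨w, rfl⟩
        exact norm_nonneg _
      exact ciInf_le hbdd ⟨p, hp⟩
  have key : ∀ w ∈ K, (inner ℝ (s - p) (w - p) : ℝ) ≤ 0 :=
    (norm_eq_iInf_iff_real_inner_le_zero hKconv hp).mp hinf
  have h2p : (2 : ℝ) • p ∈ K := by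
    intro x hx
    have := hp x hx
    simp only [real_inner_smul_left]
    linarith
  have h0 : (0 : EuclideanSpace ℝ (Fin n)) ∈ K := by
    intro x hx; simp
  have hpp : (inner ℝ (s - p) p : ℝ) = 0 := by
    have h1 := key _ h2p
    have h2 := key _ h0
    have e1 : ((2:ℝ) • p - p) = p := by
      rw [two_smul]; abel
    rw [e1] at h1
    rw [zero_sub, inner_neg_right] at h2
    linarith
  have hsp : (inner ℝ s p : ℝ) = ‖p‖ ^ 2 := by
    have := hpp
    rw [inner_sub_left, real_inner_self_eq_norm_sq] at this
    linarith
  have hle : ∀ w ∈ K, (inner ℝ (s - p) w : ℝ) ≤ 0 := by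
    intro w hw
    have := key w hw
    rw [inner_sub_right, hpp] at this
    linarith
  constructor
  · have hsq : ‖(2 : ℝ) • p - s‖ ^ 2 = 1 := by
      rw [@norm_sub_sq_real]
      rw [norm_smul, real_inner_smul_left, hnorm]
      have : (inner ℝ p s : ℝ) = ‖p‖ ^ 2 := by rw [real_inner_comm]; exact hsp
      rw [this]
      simp [mul_pow]
      ring
    nlinarith [norm_nonneg ((2 : ℝ) • p - s), sq_nonneg (‖(2 : ℝ) • p - s‖ - 1)]
  · intro x hx
    have hxK : x ∈ K := hdual hx
    have h1 : (inner ℝ s x : ℝ) ≤ (inner ℝ p x : ℝ) := by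
      have := hle x hxK
      rw [inner_sub_left] at this
      linarith
    have h2 : 0 ≤ (inner ℝ p x : ℝ) := hp x hx
    rw [inner_sub_left, real_inner_smul_left]
    rw [abs_le]
    constructor <;> linarith
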